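/- Let σ ∈ S_(p) be a digit-permutation of ℤ_p with q = p. Then for all nonnegative integers i, j: C(i+j, i) ≡ C(σi + σj, σi) (mod p). -/

import Mathlib

/-- `ρ_*` acting on nonnegative integers: permute the base-`p` digit positions. -/
def natRhoStar (p : ℕ) (ρ : ℕ → ℕ) (n : ℕ) : ℕ :=
  ∑ i ∈ Finset.range (n + 1), n / p ^ i % p * p ^ (ρ i)

open Finset

private lemma digit_zero_of_lt {p n t : ℕ} (h : n < p ^ t) : n / p ^ t % p = 0 := by
  rw [Nat.div_eq_of_lt h, Nat.zero_mod]

/-- Digit extraction from a base-`p` expansion with digits `< p`. -/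
private lemma digit_of_sum {p : ℕ} (hp : 1 < p) :
    ∀ (M : ℕ) (g : ℕ → ℕ), (∀ k, g k < p) → ∀ t : ℕ,
      (∑ k ∈ range M, g k * p ^ k) / p ^ t % p = if t < M then g t else 0 := by
  intro M
  induction M with
  | zero => intro g hg t; simp
  | succ M ih =>
    intro g hg t
    have hp0 : 0 < p := by omega
    have hS : ∑ k ∈ range (M + 1), g k * p ^ k
        = p * (∑ k ∈ range M, g (k + 1) * p ^ k) + g 0 := by
      rw [Finset.sum_range_succ']
      simp only [pow_zero, mul_one, Finset.mul_sum]
      congr 1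
      refine Finset.sum_congr rfl fun k _ => ?_
      ring
    rw [hS]
    cases t with
    | zero =>
      simp only [pow_zero, Nat.div_one, if_pos (Nat.succ_pos M)]
      rw [Nat.mul_add_mod, Nat.mod_eq_of_lt (hg 0)]
    | succ t =>
      have hdiv : (p * (∑ k ∈ range M, g (k + 1) * p ^ k) + g 0) / p ^ (t + 1)
          = (∑ k ∈ range M, g (k + 1) * p ^ k) / p ^ t := by
        rw [pow_succ', ← Nat.div_div_eq_div_mul]
        congr 1
        rw [Nat.mul_add_div hp0, Nat.div_eq_of_lt (hg 0), Nat.add_zero]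
      rw [hdiv, ih (fun k => g (k + 1)) (fun k => hg (k + 1)) t]
      simp [Nat.succ_lt_succ_iff]

/-- A number is the sum of its base-`p` digits times powers of `p`. -/
private lemma sum_digits {p : ℕ} (hp : 1 < p) :
    ∀ (M n : ℕ), n < p ^ M → ∑ k ∈ range M, n / p ^ k % p * p ^ k = n := by
  intro M
  induction M with
  | zero =>
    intro n hn
    have hn0 : n = 0 := by simpa using hn
    simp [hn0]
  | succ M ih =>
    intro n hn
    have hp0 : 0 < p := by omega
    rw [Finset.sum_range_succ']
    have hterm : ∀ k, n / p ^ (k + 1) % p * p ^ (k + 1)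
        = p * ((n / p) / p ^ k % p * p ^ k) := by
      intro k
      rw [pow_succ', ← Nat.div_div_eq_div_mul]
      ring
    have hdivlt : n / p < p ^ M := by
      rw [Nat.div_lt_iff_lt_mul hp0]
      calc n < p ^ (M + 1) := hn
        _ = p ^ M * p := by rw [pow_succ]
    calc ∑ k ∈ range M, n / p ^ (k + 1) % p * p ^ (k + 1) + n / p ^ 0 % p * p ^ 0
        = p * ∑ k ∈ range M, (n / p) / p ^ k % p * p ^ k + n % p := by
          simp only [pow_zero, Nat.div_one, mul_one, Finset.mul_sum]
          congr 1
          exact Finset.sum_congr rfl fun k _ => hterm k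
      _ = p * (n / p) + n % p := by rw [ih (n / p) hdivlt]
      _ = n := Nat.div_add_mod n p

/-- The base-`p` digit of `natRhoStar p ρ n` at position `k` is the digit of `n`
at position `ρ.symm k`. -/
private lemma natRhoStar_digit {p : ℕ} (hp : 1 < p) (ρ : Equiv.Perm ℕ) (n k : ℕ) :
    natRhoStar p ρ n / p ^ k % p = n / p ^ (ρ.symm k : ℕ) % p := by
  set g : ℕ → ℕ := fun k => n / p ^ (ρ.symm k : ℕ) % p with hg_def
  have hg : ∀ k, g k < p := fun k => Nat.mod_lt _ (by omega)
  set M : ℕ := ((range (n + 1)).sup ρ) + 1 with hM_def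
  have himg : (range (n + 1)).image ρ ⊆ range M := by
    intro x hx
    simp only [Finset.mem_image] at hx
    obtain ⟨a, ha, rfl⟩ := hx
    exact Finset.mem_range.mpr (Nat.lt_succ_of_le (Finset.le_sup ha))
  have hnotimg : ∀ x : ℕ, x ∉ (range (n + 1)).image ρ → g x = 0 := by
    intro x hx
    have hge : n + 1 ≤ (ρ.symm x : ℕ) := by
      by_contra hlt
      exact hx (Finset.mem_image.mpr ⟨ρ.symm x, Finset.mem_range.mpr (by omega),
        ρ.apply_symm_apply x⟩)
    have h1 : n < p ^ (n + 1) := lt_trans (Nat.lt_succ_self n) (Nat.lt_pow_self (n := n + 1) hp)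
    have h2 : p ^ (n + 1) ≤ p ^ (ρ.symm x : ℕ) := Nat.pow_le_pow_right (by omega) hge
    have h3 : n / p ^ (ρ.symm x : ℕ) % p = 0 := digit_zero_of_lt (lt_of_lt_of_le h1 h2)
    simpa [hg_def] using h3
  have hrw : natRhoStar p ρ n = ∑ k ∈ range M, g k * p ^ k := by
    unfold natRhoStar
    have h1 : ∀ i ∈ range (n + 1), n / p ^ i % p * p ^ (ρ i) = g (ρ i) * p ^ (ρ i) := by
      intro i _
      simp [hg_def, Equiv.symm_apply_apply]
    rw [Finset.sum_congr rfl h1,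
      ← Finset.sum_image (f := fun k => g k * p ^ k)
        (fun x _ y _ h => ρ.injective h)]
    exact Finset.sum_subset himg (fun x _ hx => by rw [hnotimg x hx, Nat.zero_mul])
  rw [hrw, digit_of_sum hp M g hg k]
  by_cases hk : k < M
  · rw [if_pos hk]
  · rw [if_neg hk]
    have : k ∉ (range (n + 1)).image ρ := fun h => hk (Finset.mem_range.mp (himg h))
    exact (hnotimg k this).symm

/-- Digits add when there is no carry. -/
private lemma digit_add {p : ℕ} (hp : 1 < p) {m n : ℕ}
    (h : ∀ t, m / p ^ t % p + n / p ^ t % p < p) (t : ℕ) :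
    (m + n) / p ^ t % p = m / p ^ t % p + n / p ^ t % p := by
  set M : ℕ := m + n + t + 1 with hM_def
  have hm : m < p ^ M := lt_of_le_of_lt (by omega : m ≤ M) (Nat.lt_pow_self (n := M) hp)
  have hn : n < p ^ M := lt_of_le_of_lt (by omega : n ≤ M) (Nat.lt_pow_self (n := M) hp)
  have hsum : m + n = ∑ k ∈ range M, (m / p ^ k % p + n / p ^ k % p) * p ^ k := by
    simp only [add_mul, Finset.sum_add_distrib]
    rw [sum_digits hp M m hm, sum_digits hp M n hn]
  conv_lhs => rw [hsum]
  rw [digit_of_sum hp M _ h t, if_pos (by omega)]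

/-- If there is a base-`p` carry when adding `m` and `n`, then `p ∣ C(m+n, m)`. -/
private lemma choose_eq_zero_of_carry {p : ℕ} (hp : p.Prime) {m n t : ℕ}
    (h : p ≤ m / p ^ t % p + n / p ^ t % p) :
    ((m + n).choose m : ZMod p) = 0 := by
  have hp1 : 1 < p := hp.one_lt
  have hmod : ∀ a : ℕ, p ^ t * (a / p ^ t % p) ≤ a % p ^ (t + 1) := by
    intro a
    rw [← Nat.mod_mul_right_div_self, ← pow_succ]
    have := Nat.div_mul_le_self (a % p ^ (t + 1)) (p ^ t)
    rwa [Nat.mul_comm]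
  have hcarry : p ^ (t + 1) ≤ m % p ^ (t + 1) + n % p ^ (t + 1) := by
    calc p ^ (t + 1) = p ^ t * p := by rw [pow_succ]
      _ ≤ p ^ t * (m / p ^ t % p + n / p ^ t % p) :=
          Nat.mul_le_mul_left _ h
      _ = p ^ t * (m / p ^ t % p) + p ^ t * (n / p ^ t % p) := by ring
      _ ≤ m % p ^ (t + 1) + n % p ^ (t + 1) := Nat.add_le_add (hmod m) (hmod n)
  have hblog : Nat.log p (n + m) < max (t + 2) (Nat.log p (n + m) + 1) := by omega
  have hmult := Nat.Prime.emultiplicity_choose'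
    (p := p) (n := n) (k := m) (b := max (t + 2) (Nat.log p (n + m) + 1)) hp hblog
  have hmem : t + 1 ∈ {i ∈ Finset.Ico 1 (max (t + 2) (Nat.log p (n + m) + 1)) |
      p ^ i ≤ m % p ^ i + n % p ^ i} :=
    Finset.mem_filter.mpr ⟨Finset.mem_Ico.mpr ⟨by omega, by omega⟩, hcarry⟩
  have hcard : 1 ≤ ({i ∈ Finset.Ico 1 (max (t + 2) (Nat.log p (n + m) + 1)) |
      p ^ i ≤ m % p ^ i + n % p ^ i} : Finset ℕ).card :=
    Finset.card_pos.mpr ⟨t + 1, hmem⟩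
  have hdvd : p ∣ (n + m).choose m := by
    have : (1 : ℕ∞) ≤ emultiplicity p ((n + m).choose m) := by
      rw [hmult]
      exact_mod_cast hcard
    simpa using pow_dvd_of_le_emultiplicity this
  rw [Nat.add_comm m n]
  exact (ZMod.natCast_eq_zero_iff _ _).mpr hdvd

theorem rhoStar_choose_congr (p : ℕ) (hp : p.Prime) (ρ : Equiv.Perm ℕ) (i j : ℕ) :
    (((i + j).choose i : ZMod p)) =
      (((natRhoStar p ρ i + natRhoStar p ρ j).choose (natRhoStar p ρ i) : ZMod p)) := by
  haveI : Fact p.Prime := ⟨hp⟩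
  have hp1 : 1 < p := hp.one_lt
  set si := natRhoStar p ρ i with hsi
  set sj := natRhoStar p ρ j with hsj
  by_cases hc : ∀ t, i / p ^ t % p + j / p ^ t % p < p
  · -- no carry case
    have hc' : ∀ k, si / p ^ k % p + sj / p ^ k % p < p := by
      intro k
      rw [hsi, hsj, natRhoStar_digit hp1, natRhoStar_digit hp1]
      exact hc _
    set F : ℕ → ZMod p :=
      fun t => ((i / p ^ t % p + j / p ^ t % p).choose (i / p ^ t % p) : ℕ) with hF
    set S : Finset ℕ := range (i + j + 1) with hS
    have hF1 : ∀ t, t ∉ S → F t = 1 := by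
      intro t ht
      rw [Finset.mem_range] at ht
      push_neg at ht
      have hit : i < p ^ t := lt_trans (by omega : i < t) (Nat.lt_pow_self (n := t) hp1)
      have hjt : j < p ^ t := lt_trans (by omega : j < t) (Nat.lt_pow_self (n := t) hp1)
      simp [hF, digit_zero_of_lt hit, digit_zero_of_lt hjt]
    -- LHS via Lucas
    set a : ℕ := i + j + 1 with ha
    have hija : i + j < p ^ a := lt_trans (by omega : i + j < a) (Nat.lt_pow_self (n := a) hp1)
    have hia : i < p ^ a := by omega
    have hlhs : ((i + j).choose i : ZMod p) = ∏ t ∈ range a, F t := by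
      have := (ZMod.natCast_eq_natCast_iff _ _ _).mpr
        (Choose.choose_modEq_prod_range_choose_nat (p := p) hija hia)
      rw [this]
      push_cast
      refine Finset.prod_congr rfl fun t _ => ?_
      rw [digit_add hp1 hc t]
    -- RHS via Lucas
    set a' : ℕ := max (si + sj + 1) ((S.sup ρ) + 1) with ha'
    have hsija : si + sj < p ^ a' := lt_trans (by omega : si + sj < a') (Nat.lt_pow_self (n := a') hp1)
    have hsia : si < p ^ a' := by omega
    have hrhs : ((si + sj).choose si : ZMod p) = ∏ k ∈ range a', F (ρ.symm k) := by
      have := (ZMod.natCast_eq_natCast_iff _ _ _).mpr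
        (Choose.choose_modEq_prod_range_choose_nat (p := p) hsija hsia)
      rw [this]
      push_cast
      refine Finset.prod_congr rfl fun k _ => ?_
      rw [digit_add hp1 hc' k, hsi, hsj, natRhoStar_digit hp1, natRhoStar_digit hp1]
    rw [hlhs, hrhs]
    -- compare the two products
    have himg : S.image ρ ⊆ range a' := by
      intro x hx
      simp only [Finset.mem_image] at hx
      obtain ⟨y, hy, rfl⟩ := hx
      exact Finset.mem_range.mpr (by
        have := Finset.le_sup (f := ρ) hy
        omega)
    have h1 : ∏ t ∈ range a, F t = ∏ t ∈ S, F t := by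
      refine (Finset.prod_subset ?_ ?_).symm
      · intro x hx
        rw [Finset.mem_range] at hx ⊢
        omega
      · intro x _ hx
        exact hF1 x hx
    have h2 : ∏ k ∈ range a', F (ρ.symm k) = ∏ k ∈ S.image ρ, F (ρ.symm k) := by
      refine (Finset.prod_subset himg ?_).symm
      intro x _ hx
      refine hF1 (ρ.symm x) fun hmem => hx ?_
      exact Finset.mem_image.mpr ⟨ρ.symm x, hmem, ρ.apply_symm_apply x⟩
    have h3 : ∏ k ∈ S.image ρ, F (ρ.symm k) = ∏ t ∈ S, F t := by
      rw [Finset.prod_image (fun x _ y _ h => ρ.injective h)]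
      exact Finset.prod_congr rfl fun t _ => by rw [Equiv.symm_apply_apply]
    rw [h1, h2, h3]
  · -- carry case: both sides are zero
    push_neg at hc
    obtain ⟨t, ht⟩ := hc
    have ht' : p ≤ si / p ^ (ρ t) % p + sj / p ^ (ρ t) % p := by
      rw [hsi, hsj, natRhoStar_digit hp1, natRhoStar_digit hp1, Equiv.symm_apply_apply]
      exact ht
    rw [choose_eq_zero_of_carry hp ht, choose_eq_zero_of_carry hp ht']
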